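/- arXiv:2512.04218 — 2 statements merged into one kernel-verified Lean document; each statement's English description precedes it below -/
import Mathlib

section
/- Let z : {1, ..., m} → ℝ_{>0} satisfy z(1) = 1 and z(k+1)/z(k) = k/ρ for 1 ≤ k < m, where ρ ≥ m. Then for 2 ≤ k ≤ m, log z(k) ≤ -log ρ - k + log(2k²). -/
open Real

lemma fact_log_bound : ∀ k : ℕ, 2 ≤ k →
    Real.log (Nat.factorial (k - 1)) ≤ Real.log 2 + k * (Real.log k - 1) := by
  intro k hk
  induction k, hk using Nat.le_induction with
  | base =>
    simp [Nat.factorial]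
    nlinarith [Real.log_two_gt_d9]
  | succ k hk ih =>
    have hk1 : (1:ℝ) ≤ (k:ℝ) := by exact_mod_cast hk.trans' (by norm_num)
    have hkpos : (0:ℝ) < (k:ℝ) := by linarith
    have hfac : (k + 1 - 1) = k := by omega
    have hfac2 : Nat.factorial k = k * Nat.factorial (k - 1) := by
      have : k = (k - 1) + 1 := by omega
      rw [this, Nat.factorial_succ]
      congr 1 <;> omega
    rw [hfac, hfac2]
    have hfne : ((Nat.factorial (k-1)):ℝ) ≠ 0 := by
      exact_mod_cast (Nat.factorial_pos (k-1)).ne'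
    push_cast
    rw [Real.log_mul (by positivity) hfne]
    -- key inequality: 1 ≤ (k+1) * (log (k+1) - log k)
    have hlog : Real.log ((k:ℝ)⁻¹ * ((k:ℝ)+1)) ≥ 1 - (k:ℝ)/((k:ℝ)+1) := by
      have h1 : Real.log (((k:ℝ)⁻¹ * ((k:ℝ)+1))⁻¹) ≤ ((k:ℝ)⁻¹ * ((k:ℝ)+1))⁻¹ - 1 :=
        Real.log_le_sub_one_of_pos (by positivity)
      rw [Real.log_inv] at h1
      have h2 : ((k:ℝ)⁻¹ * ((k:ℝ)+1))⁻¹ = (k:ℝ)/((k:ℝ)+1) := by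
        field_simp
      rw [h2] at h1
      linarith
    have hsplit : Real.log ((k:ℝ)⁻¹ * ((k:ℝ)+1)) = Real.log ((k:ℝ)+1) - Real.log k := by
      rw [Real.log_mul (by positivity) (by positivity), Real.log_inv]; ring
    rw [hsplit] at hlog
    have hkey : 1 ≤ ((k:ℝ)+1) * (Real.log ((k:ℝ)+1) - Real.log k) := by
      have hfrac : 1 - (k:ℝ)/((k:ℝ)+1) = 1/((k:ℝ)+1) := by field_simp; ring
      rw [hfrac] at hlog
      have := mul_le_mul_of_nonneg_left hlog (by positivity : (0:ℝ) ≤ (k:ℝ)+1)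
      calc (1:ℝ) = ((k:ℝ)+1) * (1/((k:ℝ)+1)) := by field_simp
        _ ≤ _ := this
    nlinarith [ih, hkey]

/-- If `z(1) = 1` and `z(k+1)/z(k) = k/ρ` for `1 ≤ k < m`, with `m ≤ ρ`, then for
`2 ≤ k ≤ m` we have `log z(k) ≤ -log ρ - k + log(2k²)`. -/
theorem stmt_10 (ρ : ℝ) (hρ : 0 < ρ) (m : ℕ) (hm : (m : ℝ) ≤ ρ)
    (z : ℕ → ℝ) (hz1 : z 1 = 1)
    (hzpos : ∀ k : ℕ, 1 ≤ k → k ≤ m → 0 < z k)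
    (hzrec : ∀ k : ℕ, 1 ≤ k → k < m → z (k + 1) / z k = (k : ℝ) / ρ) :
    ∀ k : ℕ, 2 ≤ k → k ≤ m →
      Real.log (z k) ≤ -Real.log ρ - (k : ℝ) + Real.log (2 * (k : ℝ) ^ 2) := by
  -- explicit formula for z
  have hzf : ∀ k : ℕ, 1 ≤ k → k ≤ m → z k = (Nat.factorial (k - 1)) / ρ ^ (k - 1) := by
    intro k hk
    induction k, hk using Nat.le_induction with
    | base => intro _; simp [hz1, Nat.factorial]
    | succ k hk ih =>
      intro hkm
      have hklt : k < m := by omega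
      have hzk := ih (by omega)
      have hrec := hzrec k hk hklt
      have hzkne : z k ≠ 0 := ne_of_gt (hzpos k hk (by omega))
      have hzk1 : z (k + 1) = (k:ℝ)/ρ * z k := by
        field_simp at hrec ⊢
        linarith [hrec]
      rw [hzk1, hzk]
      have h1 : (k + 1 - 1) = k := by omega
      have hfac2 : Nat.factorial k = k * Nat.factorial (k - 1) := by
        have : k = (k - 1) + 1 := by omega
        rw [this, Nat.factorial_succ]
        congr 1 <;> omega
      have h2 : k = (k - 1) + 1 := by omega
      rw [h1, hfac2]
      push_cast
      rw [h2, pow_succ]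
      have : ρ ≠ 0 := ne_of_gt hρ
      field_simp
      ring
      congr 1; omega
  intro k hk2 hkm
  have hk1 : 1 ≤ k := by omega
  have hkR : (2:ℝ) ≤ (k:ℝ) := by exact_mod_cast hk2
  have hkρ : (k:ℝ) ≤ ρ := le_trans (by exact_mod_cast hkm) hm
  have hlogk : Real.log k ≤ Real.log ρ := Real.log_le_log (by positivity) hkρ
  have hlogk0 : 0 ≤ Real.log k := Real.log_nonneg (by linarith)
  rw [hzf k hk1 hkm]
  have hfpos : (0:ℝ) < (Nat.factorial (k-1) : ℝ) := by positivity
  rw [Real.log_div (ne_of_gt hfpos) (by positivity), Real.log_pow]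
  have hbound := fact_log_bound k hk2
  have hrhs : Real.log (2 * (k:ℝ)^2) = Real.log 2 + 2 * Real.log k := by
    rw [Real.log_mul (by norm_num) (by positivity), Real.log_pow]
    push_cast; ring
  rw [hrhs]
  have hcast : ((k - 1 : ℕ) : ℝ) = (k:ℝ) - 1 := by
    have : k = (k-1)+1 := by omega
    push_cast [Nat.cast_sub hk1]
    ring
  rw [hcast]
  nlinarith [mul_nonneg (by linarith : (0:ℝ) ≤ (k:ℝ) - 2) (by linarith : (0:ℝ) ≤ Real.log ρ - Real.log k)]
end

section
/- Let X be a Poisson point process on [0,1] with intensity λ and, for w ∈ (0,1), partition (0,1) into intervals I_k = (k w/2, (k+1) w/2) for k = 0, ..., ⌊2/w⌋ - 1. Fix α ∈ (0, 1/2). There exists C > 0 such that if λ w ≥ C log λ, then P(X has at least αλw points in every subinterval (y, y+w) with y ∈ [0, 1-w]) → 1 as λ → ∞. -/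
open MeasureTheory ProbabilityTheory Filter

/-- `X` is a Poisson point process on `[0,1]` with intensity `l` (under `P`): counts of points
in measurable subsets of `[0,1]` are Poisson with mean `l · |s|`, and counts in pairwise
disjoint sets are independent. -/
def IsPPP {Ω : Type*} [MeasurableSpace Ω] (P : Measure Ω) (l : ℝ) (X : Ω → Set ℝ) : Prop :=
  (∀ s : Set ℝ, MeasurableSet s → s ⊆ Set.Icc 0 1 → ∀ k : ℕ,
      P {ω | (X ω ∩ s).ncard = k} =
        ENNReal.ofReal (Real.exp (-(l * (volume s).toReal)) *
          (l * (volume s).toReal) ^ k / k.factorial)) ∧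
  (∀ (n : ℕ) (s : Fin n → Set ℝ), (∀ i, MeasurableSet (s i) ∧ s i ⊆ Set.Icc 0 1) →
      Pairwise (Function.onFun Disjoint s) →
      iIndepFun (fun i ω => (X ω ∩ s i).ncard) P)

/-- Chernoff-type lower-tail estimate for the Poisson pmf partial sums. -/
lemma aux_tail (a μ : ℝ) (ha0 : 0 < a) (ha1 : a < 1) (hμ : 0 ≤ μ)
    (m : ℕ) (hm : (m : ℝ) ≤ a * μ + 1) :
    ∑ j ∈ Finset.range m, Real.exp (-μ) * μ ^ j / j.factorial
      ≤ Real.exp (-((1 - a + a * Real.log a) * μ)) := by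
  obtain _ | n := m
  · simpa using (Real.exp_pos _).le
  have hn : (n : ℝ) ≤ a * μ := by push_cast at hm; linarith
  have hinv : 1 ≤ 1/a := by rw [le_div_iff₀ ha0]; linarith
  have key : ∀ j ∈ Finset.range (n+1), Real.exp (-μ) * μ ^ j / j.factorial
      ≤ Real.exp (-μ) * (1/a)^n * ((a*μ) ^ j / j.factorial) := by
    intro j hj
    have hj' : j ≤ n := Nat.lt_succ_iff.mp (Finset.mem_range.mp hj)
    have h2 : (1/a)^j ≤ (1/a)^n := pow_le_pow_right₀ hinv hj'
    have h1 : μ ^ j ≤ (1/a)^n * (a*μ)^j := by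
      have he : μ ^ j = (1/a)^j * (a*μ)^j := by
        rw [← mul_pow]; field_simp
      rw [he]
      have : (0:ℝ) ≤ (a*μ)^j := pow_nonneg (by positivity) j
      nlinarith
    have hr : Real.exp (-μ) * (1/a)^n * ((a*μ)^j / j.factorial)
        = Real.exp (-μ) * (((1/a)^n * (a*μ)^j) / j.factorial) := by ring
    rw [hr, mul_div_assoc]
    gcongr
  calc ∑ j ∈ Finset.range (n+1), Real.exp (-μ) * μ ^ j / j.factorial
      ≤ ∑ j ∈ Finset.range (n+1), Real.exp (-μ) * (1/a)^n * ((a*μ) ^ j / j.factorial) :=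
        Finset.sum_le_sum key
    _ = Real.exp (-μ) * (1/a)^n * ∑ j ∈ Finset.range (n+1), (a*μ) ^ j / j.factorial := by
        rw [Finset.mul_sum]
    _ ≤ Real.exp (-μ) * (1/a)^n * Real.exp (a*μ) := by
        have := Real.sum_le_exp_of_nonneg (by positivity : (0:ℝ) ≤ a*μ) (n+1)
        have h0 : (0:ℝ) ≤ Real.exp (-μ) * (1/a)^n := by positivity
        exact mul_le_mul_of_nonneg_left this h0
    _ ≤ Real.exp (-((1 - a + a * Real.log a) * μ)) := by
        have hpow : (1/a:ℝ)^n = Real.exp (n * Real.log (1/a)) := by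
          rw [Real.exp_nat_mul, Real.exp_log (by positivity)]
        rw [hpow, ← Real.exp_add, ← Real.exp_add, Real.exp_le_exp, one_div, Real.log_inv]
        have hla : 0 ≤ -Real.log a := neg_nonneg.2 (Real.log_nonpos ha0.le ha1.le)
        nlinarith [mul_le_mul_of_nonneg_right hn hla]

/-- Union bound for the lower tail of the count in a fixed measurable set. -/
lemma aux_set_bound {Ω : Type*} [MeasurableSpace Ω] (P : Measure Ω) (l : ℝ) (X : Ω → Set ℝ)
    (hl : 0 ≤ l) (h : IsPPP P l X) (s : Set ℝ) (hs : MeasurableSet s)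
    (hs1 : s ⊆ Set.Icc 0 1) (m : ℕ) :
    P {ω | (X ω ∩ s).ncard < m} ≤
      ENNReal.ofReal (∑ j ∈ Finset.range m,
        Real.exp (-(l * (volume s).toReal)) * (l * (volume s).toReal) ^ j / j.factorial) := by
  have hsub : {ω | (X ω ∩ s).ncard < m} ⊆ ⋃ j ∈ Finset.range m, {ω | (X ω ∩ s).ncard = j} := by
    intro ω hω
    exact Set.mem_biUnion (Finset.mem_range.mpr hω) rfl
  calc P {ω | (X ω ∩ s).ncard < m}
      ≤ ∑ j ∈ Finset.range m, P {ω | (X ω ∩ s).ncard = j} :=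
        (measure_mono hsub).trans (measure_biUnion_finset_le _ _)
    _ = ∑ j ∈ Finset.range m, ENNReal.ofReal
          (Real.exp (-(l * (volume s).toReal)) * (l * (volume s).toReal) ^ j / j.factorial) :=
        Finset.sum_congr rfl fun j _ => h.1 s hs hs1 j
    _ = _ := by
        rw [← ENNReal.ofReal_sum_of_nonneg]
        intro j _
        have := ENNReal.toReal_nonneg (a := volume s)
        positivity

set_option maxHeartbeats 1000000

/-- For each `α ∈ (0, 1/2)` there is `C > 0` such that if `λ w_λ ≥ C log λ` and `X_λ` is a
Poisson point process on `[0,1]` with intensity `λ`, then the probability that every window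
`(y, y+w_λ)` with `y ∈ [0, 1-w_λ]` contains at least `α λ w_λ` points tends to `1` as
`λ → ∞`. -/
theorem stmt_14 {Ω : Type*} [MeasurableSpace Ω] (P : Measure Ω) [IsProbabilityMeasure P]
    (α : ℝ) (hα : α ∈ Set.Ioo (0:ℝ) (1/2)) :
    ∃ C : ℝ, 0 < C ∧ ∀ (w : ℝ → ℝ) (X : ℝ → Ω → Set ℝ),
      (∀ l : ℝ, 1 ≤ l → 0 < w l ∧ w l ≤ 1) →
      (∀ l : ℝ, 1 ≤ l → C * Real.log l ≤ l * w l) →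
      (∀ l : ℝ, 1 ≤ l → IsPPP P l (X l)) →
      Tendsto (fun l : ℝ => P {ω | ∀ y : ℝ, 0 ≤ y → y ≤ 1 - w l →
          α * l * w l ≤ ((X l ω ∩ Set.Ioo y (y + w l)).ncard : ℝ)})
        atTop (nhds 1) := by
  obtain ⟨hα0, hα2⟩ := hα
  set a : ℝ := 2*α with ha_def
  have ha0 : 0 < a := by positivity
  have ha1 : a < 1 := by rw [ha_def]; linarith
  set c : ℝ := 1 - a + a * Real.log a with hc_def
  have hc : 0 < c := by
    have hne : (1:ℝ)/a ≠ 1 := by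
      intro h
      rw [div_eq_one_iff_eq ha0.ne'] at h
      exact ha1.ne' h
    have h1 : Real.log (1/a) < 1/a - 1 := Real.log_lt_sub_one_of_pos (by positivity) hne
    rw [one_div, Real.log_inv] at h1
    have ha' : a * a⁻¹ = 1 := mul_inv_cancel₀ ha0.ne'
    nlinarith [mul_lt_mul_of_pos_left h1 ha0]
  refine ⟨6/c, by positivity, ?_⟩
  intro w X hw hCw hX
  -- the key eventual lower bound
  have hev : ∀ᶠ l in atTop, 1 - ENNReal.ofReal (2 / l^2) ≤
      P {ω | ∀ y : ℝ, 0 ≤ y → y ≤ 1 - w l →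
          α * l * w l ≤ ((X l ω ∩ Set.Ioo y (y + w l)).ncard : ℝ)} := by
    filter_upwards [eventually_ge_atTop (max 1 (Real.exp (c/3)))] with l hl
    have hl1 : (1:ℝ) ≤ l := le_trans (le_max_left _ _) hl
    have hl0 : (0:ℝ) < l := lt_of_lt_of_le zero_lt_one hl1
    have hlog : c/3 ≤ Real.log l :=
      (Real.le_log_iff_exp_le hl0).mpr (le_trans (le_max_right _ _) hl)
    obtain ⟨hw0, hw1⟩ := hw l hl1
    have hlw : 6/c * Real.log l ≤ l * w l := hCw l hl1
    have hlw2 : (2:ℝ) ≤ l * w l := by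
      have : 6/c * (c/3) ≤ 6/c * Real.log l := by
        apply mul_le_mul_of_nonneg_left hlog (by positivity)
      have h63 : 6/c * (c/3) = 2 := by field_simp; ring
      linarith
    set W := w l with hW_def
    set K := ⌊2/W⌋₊ with hK_def
    set m := ⌈α * l * W⌉₊ with hm_def
    have halw : 0 < α * l * W := by positivity
    have hm1 : 0 < m := Nat.ceil_pos.mpr halw
    have hKle : (K:ℝ) ≤ 2/W := Nat.floor_le (by positivity)
    -- geometry: each subinterval lies in [0,1]
    have hIsub : ∀ k : ℕ, k < K → Set.Ioo ((k:ℝ)*W/2) (((k:ℝ)+1)*W/2) ⊆ Set.Icc 0 1 := by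
      intro k hk x hx
      have hk1 : (k:ℝ) + 1 ≤ K := by exact_mod_cast Nat.succ_le_of_lt hk
      have hub : ((k:ℝ)+1)*W/2 ≤ 1 := by
        have : ((k:ℝ)+1)*W ≤ (2/W)*W := by
          apply mul_le_mul_of_nonneg_right (le_trans hk1 hKle) hw0.le
        rw [div_mul_cancel₀ _ hw0.ne'] at this
        linarith
      constructor
      · have : (0:ℝ) ≤ (k:ℝ)*W/2 := by positivity
        linarith [hx.1]
      · linarith [hx.2]
    -- the bad events
    set badI := {ω : Ω | (X l ω ∩ Set.Icc 0 1).ncard < m} with hbadI_def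
    set bad := fun k : ℕ => {ω : Ω | (X l ω ∩ Set.Ioo ((k:ℝ)*W/2) (((k:ℝ)+1)*W/2)).ncard < m}
      with hbad_def
    -- covering step
    have hcover : {ω : Ω | ∀ y : ℝ, 0 ≤ y → y ≤ 1 - W →
          α * l * W ≤ ((X l ω ∩ Set.Ioo y (y + W)).ncard : ℝ)}ᶜ ⊆
        badI ∪ ⋃ k ∈ Finset.range K, bad k := by
      intro ω hω
      simp only [Set.mem_compl_iff, Set.mem_setOf_eq, not_forall] at hω
      obtain ⟨y, hy0, hy1, hylt⟩ := hω
      push_neg at hylt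
      have hwin : Set.Ioo y (y + W) ⊆ Set.Icc 0 1 := by
        intro x hx
        exact ⟨le_of_lt (lt_of_le_of_lt hy0 hx.1), by linarith [hx.2]⟩
      by_cases hfin : (X l ω ∩ Set.Icc 0 1).Finite
      · -- finite case: find a fully contained subinterval
        right
        set k := ⌈2*y/W⌉₊ with hk_def
        have hceil := Nat.le_ceil (2*y/W)
        have hceil2 := Nat.ceil_lt_add_one (by positivity : (0:ℝ) ≤ 2*y/W)
        have hq : 2*y/W*W = 2*y := div_mul_cancel₀ _ hw0.ne'
        have hg1 : y ≤ (k:ℝ)*W/2 := by nlinarith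
        have hg2 : ((k:ℝ)+1)*W/2 ≤ y + W := by nlinarith
        have hkK : k < K := by
          have h2 : ((k + 1 : ℕ):ℝ) ≤ 2/W := by
            rw [le_div_iff₀ hw0]; push_cast; nlinarith
          have h3 := Nat.le_floor h2
          omega
        have hsubwin : Set.Ioo ((k:ℝ)*W/2) (((k:ℝ)+1)*W/2) ⊆ Set.Ioo y (y + W) :=
          Set.Ioo_subset_Ioo hg1 hg2
        refine Set.mem_biUnion (Finset.mem_range.mpr hkK) ?_
        have hwinfin : (X l ω ∩ Set.Ioo y (y + W)).Finite :=
          hfin.subset (Set.inter_subset_inter_right _ hwin)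
        have hmono : (X l ω ∩ Set.Ioo ((k:ℝ)*W/2) (((k:ℝ)+1)*W/2)).ncard ≤
            (X l ω ∩ Set.Ioo y (y + W)).ncard :=
          Set.ncard_le_ncard (Set.inter_subset_inter_right _ hsubwin) hwinfin
        have hlt : (X l ω ∩ Set.Ioo y (y + W)).ncard < m := Nat.lt_ceil.mpr hylt
        exact lt_of_le_of_lt hmono hlt
      · -- infinite case
        left
        have : (X l ω ∩ Set.Icc (0:ℝ) 1).ncard = 0 := Set.Infinite.ncard hfin
        show (X l ω ∩ Set.Icc (0:ℝ) 1).ncard < m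
        omega
    -- probability bound on each bad event
    have hE := hX l hl1
    set E := ENNReal.ofReal (Real.exp (-(c * (l * (W / 2))))) with hE_def
    have hbadIle : P badI ≤ E := by
      have hvol : (volume (Set.Icc (0:ℝ) 1)).toReal = 1 := by
        rw [Real.volume_Icc]; simp
      have h1 := aux_set_bound P l (X l) (by linarith) hE (Set.Icc 0 1)
        measurableSet_Icc (subset_refl _) m
      rw [hvol, mul_one] at h1
      refine h1.trans ?_
      apply ENNReal.ofReal_le_ofReal
      have hmlt := Nat.ceil_lt_add_one halw.le
      have h2 := aux_tail a l ha0 ha1 (by linarith) m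
        (by
          have hle1 : α * l * W ≤ α * l * 1 := by
            apply mul_le_mul_of_nonneg_left hw1 (by positivity)
          have h2a : a * l = 2 * (α * l) := by rw [ha_def]; ring
          have h3a : (0:ℝ) ≤ α * l := by positivity
          rw [← hm_def] at hmlt
          linarith)
      rw [show (1 - a + a * Real.log a) = c from hc_def.symm] at h2
      refine h2.trans ?_
      rw [Real.exp_le_exp]
      have hWl : l * (W / 2) ≤ l := by
        calc l * (W / 2) ≤ l * 1 := mul_le_mul_of_nonneg_left (by linarith) (by linarith)
          _ = l := mul_one l
      linarith [mul_le_mul_of_nonneg_left hWl hc.le]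
    have hbadkle : ∀ k ∈ Finset.range K, P (bad k) ≤ E := by
      intro k hk
      have hkK := Finset.mem_range.mp hk
      have hvol : (volume (Set.Ioo ((k:ℝ)*W/2) (((k:ℝ)+1)*W/2))).toReal = W/2 := by
        rw [Real.volume_Ioo, ENNReal.toReal_ofReal (by ring_nf; nlinarith)]
        ring
      have h1 := aux_set_bound P l (X l) (by linarith) hE _
        measurableSet_Ioo (hIsub k hkK) m
      rw [hvol] at h1
      refine h1.trans ?_
      apply ENNReal.ofReal_le_ofReal
      have hmlt := Nat.ceil_lt_add_one halw.le
      have h2 := aux_tail a (l * (W / 2)) ha0 ha1 (by positivity) m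
        (by
          have hma : a * (l * (W / 2)) = α * l * W := by rw [ha_def]; ring
          rw [← hm_def] at hmlt
          linarith)
      rw [show (1 - a + a * Real.log a) = c from hc_def.symm] at h2
      exact h2
    -- total bound
    have htotal : P (badI ∪ ⋃ k ∈ Finset.range K, bad k) ≤ ENNReal.ofReal (2 / l^2) := by
      have h1 : P (badI ∪ ⋃ k ∈ Finset.range K, bad k) ≤ ((K:ENNReal) + 1) * E := by
        calc P (badI ∪ ⋃ k ∈ Finset.range K, bad k)
            ≤ P badI + P (⋃ k ∈ Finset.range K, bad k) := measure_union_le _ _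
          _ ≤ E + ∑ k ∈ Finset.range K, P (bad k) :=
              add_le_add hbadIle (measure_biUnion_finset_le _ _)
          _ ≤ E + ∑ _k ∈ Finset.range K, E := by
              gcongr with k hk
              exact hbadkle k hk
          _ = E + (K:ENNReal) * E := by rw [Finset.sum_const, Finset.card_range, nsmul_eq_mul]
          _ = ((K:ENNReal) + 1) * E := by ring
      refine h1.trans ?_
      have hKR : ((K:ENNReal) + 1) * E = ENNReal.ofReal (((K:ℝ) + 1) *
          Real.exp (-(c * (l * (W / 2))))) := by
        rw [hE_def, ← ENNReal.ofReal_natCast K, ← ENNReal.ofReal_one,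
          ← ENNReal.ofReal_add (by positivity) (by norm_num),
          ← ENNReal.ofReal_mul (by positivity)]
      rw [hKR]
      apply ENNReal.ofReal_le_ofReal
      -- real-number estimate
      have hK2 : (K:ℝ) ≤ l := by
        refine hKle.trans ?_
        rw [div_le_iff₀ hw0]
        linarith
      have hexp : Real.exp (-(c * (l * (W / 2)))) ≤ (l^3)⁻¹ := by
        have h3 : 3 * Real.log l ≤ c * (l * (W / 2)) := by
          have := mul_le_mul_of_nonneg_left hlw hc.le
          have hcc : c * (6/c * Real.log l) = 6 * Real.log l := by field_simp
          nlinarith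
        have : Real.exp (3 * Real.log l) = l ^ 3 := by
          rw [show (3:ℝ) * Real.log l = Real.log (l ^ 3) by
              rw [Real.log_pow]; norm_num,
            Real.exp_log (by positivity)]
        rw [Real.exp_neg]
        rw [← this]
        exact inv_anti₀ (Real.exp_pos _) (Real.exp_le_exp.mpr h3)
      calc ((K:ℝ) + 1) * Real.exp (-(c * (l * (W / 2))))
          ≤ (l + 1) * (l^3)⁻¹ := by
            apply mul_le_mul (by linarith) hexp (Real.exp_pos _).le (by linarith)
        _ ≤ 2*l * (l^3)⁻¹ := by
            apply mul_le_mul_of_nonneg_right (by linarith) (by positivity)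
        _ = 2 / l^2 := by
            field_simp
    -- conclude
    have huniv : (1:ENNReal) ≤ P {ω : Ω | ∀ y : ℝ, 0 ≤ y → y ≤ 1 - W →
          α * l * W ≤ ((X l ω ∩ Set.Ioo y (y + W)).ncard : ℝ)} +
        P (badI ∪ ⋃ k ∈ Finset.range K, bad k) := by
      have hu : (Set.univ : Set Ω) ⊆ {ω : Ω | ∀ y : ℝ, 0 ≤ y → y ≤ 1 - W →
          α * l * W ≤ ((X l ω ∩ Set.Ioo y (y + W)).ncard : ℝ)} ∪
          (badI ∪ ⋃ k ∈ Finset.range K, bad k) := by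
        intro ω _
        by_cases hg : ω ∈ {ω : Ω | ∀ y : ℝ, 0 ≤ y → y ≤ 1 - W →
            α * l * W ≤ ((X l ω ∩ Set.Ioo y (y + W)).ncard : ℝ)}
        · exact Or.inl hg
        · exact Or.inr (hcover hg)
      calc (1:ENNReal) = P Set.univ := (measure_univ).symm
        _ ≤ _ := (measure_mono hu).trans (measure_union_le _ _)
    calc 1 - ENNReal.ofReal (2 / l^2)
        ≤ 1 - P (badI ∪ ⋃ k ∈ Finset.range K, bad k) := tsub_le_tsub_left htotal 1
      _ ≤ _ := by
          rw [tsub_le_iff_right]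
          exact huniv
  -- final squeeze
  have h0 : Tendsto (fun l : ℝ => ENNReal.ofReal (2 / l^2)) atTop (nhds 0) := by
    have hr : Tendsto (fun l : ℝ => 2 / l^2) atTop (nhds 0) :=
      Tendsto.div_atTop tendsto_const_nhds (tendsto_pow_atTop two_ne_zero)
    have := (ENNReal.continuous_ofReal.tendsto 0).comp hr
    simpa [Function.comp_def] using this
  have hlb : Tendsto (fun l : ℝ => 1 - ENNReal.ofReal (2 / l^2)) atTop (nhds 1) := by
    have := ENNReal.Tendsto.sub (tendsto_const_nhds (x := (1:ENNReal))) h0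
      (Or.inl ENNReal.one_ne_top)
    simpa using this
  refine tendsto_of_tendsto_of_tendsto_of_le_of_le' hlb tendsto_const_nhds hev
    (Eventually.of_forall fun l => prob_le_one)
end
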